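/- Fix m ≥ 1, n×n real matrices Φ₁,…,Φ_m, feedback matrices K₁,…,K_m (each p×n), a symmetric positive semidefinite p×p matrix r̃, and k ∈ ℕ. Let ξ_{i+1} = Φ_{σ(i)} ξ_i for i ≥ k and define the inputs u_{k+i} = K_{σ(k+i)} ξ_{k+i}. Let Ψ = Φ_{σ(k+m−1)} ⋯ Φ_{σ(k)} be the monodromy matrix, and set Π₀ = I and Π_i = Φ_{σ(k+i−1)} ⋯ Φ_{σ(k)} for 1 ≤ i ≤ m−1, and M_u = Σ_{i=0}^{m−1} (K_{σ(k+i)} Π_i)ᵀ r̃ (K_{σ(k+i)} Π_i). Assume the family (j ↦ (Ψᵀ)ʲ M_u Ψʲ) is summable and set P_u = Σ_{j=0}^{∞} (Ψᵀ)ʲ M_u Ψʲ. Then the infinite-horizon input cost satisfies Σ_{i=0}^{∞} u_{k+i}ᵀ r̃ u_{k+i} = ξ_kᵀ P_u ξ_k, and P_u satisfies the Lyapunov equation P_u = Ψᵀ P_u Ψ + M_u. -/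

import Mathlib

open Matrix

noncomputable def quadFormAux {n : ℕ} (x : Fin n → ℝ) : Matrix (Fin n) (Fin n) ℝ →ₗ[ℝ] ℝ where
  toFun M := x ⬝ᵥ (M *ᵥ x)
  map_add' A B := by simp [add_mulVec]
  map_smul' c A := by simp [smul_mulVec]

noncomputable def conjMapAux {n : ℕ} (Ψ : Matrix (Fin n) (Fin n) ℝ) :
    Matrix (Fin n) (Fin n) ℝ →ₗ[ℝ] Matrix (Fin n) (Fin n) ℝ where
  toFun M := Ψᵀ * M * Ψ
  map_add' A B := by noncomm_ring
  map_smul' c A := by simp [Matrix.mul_smul, Matrix.smul_mul]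

lemma quad_eq_aux {n p : ℕ} (A : Matrix (Fin p) (Fin p) ℝ) (B : Matrix (Fin p) (Fin n) ℝ)
    (x : Fin n → ℝ) : (B *ᵥ x) ⬝ᵥ (A *ᵥ (B *ᵥ x)) = x ⬝ᵥ ((Bᵀ * A * B) *ᵥ x) := by
  rw [mulVec_mulVec, dotProduct_mulVec, ← vecMul_transpose, vecMul_vecMul,
    dotProduct_mulVec, Matrix.mul_assoc]

theorem stmt_9 {n p : ℕ} (m : ℕ) (hm : 1 ≤ m)
    (Φ : ℕ → Matrix (Fin n) (Fin n) ℝ)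
    (K : ℕ → Matrix (Fin p) (Fin n) ℝ)
    (rt : Matrix (Fin p) (Fin p) ℝ) (hrt : rt.PosSemidef)
    (σ : ℕ → ℕ) (hσ : ∀ k, σ k = k % m + 1)
    (k : ℕ) (ξ : ℕ → Fin n → ℝ)
    (hdyn : ∀ i, k ≤ i → ξ (i + 1) = (Φ (σ i)).mulVec (ξ i))
    (u : ℕ → Fin p → ℝ)
    (hu : ∀ i, u (k + i) = (K (σ (k + i))).mulVec (ξ (k + i)))
    (Pmat : ℕ → Matrix (Fin n) (Fin n) ℝ)
    (hPmat0 : Pmat 0 = 1)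
    (hPmat : ∀ i, Pmat (i + 1) = Φ (σ (k + i)) * Pmat i)
    (Ψ : Matrix (Fin n) (Fin n) ℝ) (hΨ : Ψ = Pmat m)
    (Mu : Matrix (Fin n) (Fin n) ℝ)
    (hMu : Mu = ∑ i ∈ Finset.range m,
      (K (σ (k + i)) * Pmat i)ᵀ * rt * (K (σ (k + i)) * Pmat i))
    (hsum : Summable fun j : ℕ => (Ψᵀ) ^ j * Mu * Ψ ^ j)
    (Pu : Matrix (Fin n) (Fin n) ℝ)
    (hPu : Pu = ∑' j : ℕ, (Ψᵀ) ^ j * Mu * Ψ ^ j) :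
    (∑' i : ℕ, (u (k + i)) ⬝ᵥ (rt.mulVec (u (k + i))))
        = (ξ k) ⬝ᵥ (Pu.mulVec (ξ k))
      ∧ Pu = Ψᵀ * Pu * Ψ + Mu := by
  haveI : NeZero m := ⟨by omega⟩
  -- state trajectory
  have hxi : ∀ i, ξ (k + i) = (Pmat i) *ᵥ ξ k := by
    intro i
    induction i with
    | zero => simp [hPmat0]
    | succ i ih =>
        have h1 := hdyn (k + i) (Nat.le_add_right _ _)
        rw [show k + (i + 1) = (k + i) + 1 from rfl, h1, ih, hPmat, ← mulVec_mulVec]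
  -- σ periodicity
  have hσper : ∀ i, σ (k + (m + i)) = σ (k + i) := by
    intro i
    rw [hσ, hσ, show k + (m + i) = (k + i) + 1 * m by ring, Nat.add_mul_mod_self_right]
  -- period shift of partial products
  have hshift : ∀ i, Pmat (m + i) = Pmat i * Ψ := by
    intro i
    induction i with
    | zero => simp [hΨ, hPmat0]
    | succ i ih =>
        rw [show m + (i + 1) = (m + i) + 1 from rfl, hPmat, hσper, ih, hPmat,
          Matrix.mul_assoc]
  have hPjm : ∀ j i, Pmat (j * m + i) = Pmat i * Ψ ^ j := by
    intro j
    induction j with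
    | zero => simp
    | succ j ih =>
        intro i
        rw [show (j + 1) * m + i = m + (j * m + i) by ring, hshift, ih,
          pow_succ, Matrix.mul_assoc]
  have hσjm : ∀ j i, σ (k + (j * m + i)) = σ (k + i) := by
    intro j i
    rw [hσ, hσ, show k + (j * m + i) = (k + i) + j * m by ring, Nat.add_mul_mod_self_right]
  -- the cost terms as quadratic forms
  set A : ℕ → Matrix (Fin n) (Fin n) ℝ :=
    fun i => (K (σ (k + i)) * Pmat i)ᵀ * rt * (K (σ (k + i)) * Pmat i) with hA
  set c : ℕ → ℝ := fun i => (u (k + i)) ⬝ᵥ (rt *ᵥ (u (k + i))) with hcdef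
  have hc : ∀ i, c i = (quadFormAux (ξ k)) (A i) := by
    intro i
    simp only [hcdef, hA, quadFormAux, LinearMap.coe_mk, AddHom.coe_mk]
    rw [hu, hxi, mulVec_mulVec, quad_eq_aux]
  have hcnonneg : ∀ i, 0 ≤ c i := by
    intro i
    have := hrt.dotProduct_mulVec_nonneg (u (k + i))
    simpa using this
  -- block decomposition
  have hAblock : ∀ j r, r < m → A (j * m + r) = (Ψᵀ) ^ j * A r * Ψ ^ j := by
    intro j r _
    rw [hA]
    simp only [hσjm j r, hPjm j r, ← Matrix.mul_assoc, transpose_mul, transpose_pow]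
  have hblock : ∀ j, ∑ r ∈ Finset.range m, A (j * m + r) = (Ψᵀ) ^ j * Mu * Ψ ^ j := by
    intro j
    rw [Finset.sum_congr rfl fun r hr => hAblock j r (Finset.mem_range.mp hr), hMu,
      Finset.mul_sum, Finset.sum_mul]
  have hcont : Continuous (quadFormAux (ξ k)) :=
    (quadFormAux (ξ k)).continuous_of_finiteDimensional
  -- summability facts
  have hS : HasSum (fun j : ℕ => (Ψᵀ) ^ j * Mu * Ψ ^ j) Pu := hPu ▸ hsum.hasSum
  have hSL : HasSum (fun j : ℕ => (quadFormAux (ξ k)) ((Ψᵀ) ^ j * Mu * Ψ ^ j))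
      ((quadFormAux (ξ k)) Pu) := hS.map ((quadFormAux (ξ k)) : _ →ₗ[ℝ] ℝ) hcont
  -- inner sums over a period
  have hinner : ∀ j : ℕ, ∑ r : Fin m, c (j * m + ↑r)
      = (quadFormAux (ξ k)) ((Ψᵀ) ^ j * Mu * Ψ ^ j) := by
    intro j
    rw [Fin.sum_univ_eq_sum_range (fun r => c (j * m + r)) m]
    rw [show ∑ r ∈ Finset.range m, c (j * m + r)
        = ∑ r ∈ Finset.range m, (quadFormAux (ξ k)) (A (j * m + r)) from
      Finset.sum_congr rfl fun r _ => hc _]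
    rw [← map_sum, hblock]
  -- summability of the double family
  have hg : Summable (fun q : ℕ × Fin m => c (q.1 * m + ↑q.2)) := by
    refine (summable_prod_of_nonneg fun q => hcnonneg _).2 ⟨fun j => Summable.of_finite, ?_⟩
    have : (fun j : ℕ => ∑' r : Fin m, c (j * m + ↑r))
        = fun j : ℕ => (quadFormAux (ξ k)) ((Ψᵀ) ^ j * Mu * Ψ ^ j) := by
      funext j
      rw [tsum_fintype, hinner]
    rw [this]
    exact hSL.summable
  constructor
  · -- main cost identity
    have e := (Nat.divModEquiv m).symm
    have h1 : ∑' i : ℕ, c i = ∑' q : ℕ × Fin m, c (q.1 * m + ↑q.2) := by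
      rw [← (Nat.divModEquiv m).symm.tsum_eq c]
      rfl
    calc ∑' i : ℕ, c i = ∑' q : ℕ × Fin m, c (q.1 * m + ↑q.2) := h1
      _ = ∑' j : ℕ, ∑' r : Fin m, c (j * m + ↑r) := hg.tsum_prod' fun j => Summable.of_finite
      _ = ∑' j : ℕ, (quadFormAux (ξ k)) ((Ψᵀ) ^ j * Mu * Ψ ^ j) := by
            congr 1; funext j; rw [tsum_fintype, hinner]
      _ = (quadFormAux (ξ k)) Pu := hSL.tsum_eq
      _ = (ξ k) ⬝ᵥ (Pu *ᵥ ξ k) := rfl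
  · -- Lyapunov equation
    have hcont2 : Continuous (conjMapAux Ψ) :=
      (conjMapAux Ψ).continuous_of_finiteDimensional
    have hmapped : HasSum (fun j : ℕ => (conjMapAux Ψ) ((Ψᵀ) ^ j * Mu * Ψ ^ j))
        ((conjMapAux Ψ) Pu) := hS.map _ hcont2
    have hshiftsum : HasSum (fun j : ℕ => (Ψᵀ) ^ (j + 1) * Mu * Ψ ^ (j + 1))
        (Ψᵀ * Pu * Ψ) := by
      have : (fun j : ℕ => (Ψᵀ) ^ (j + 1) * Mu * Ψ ^ (j + 1))
          = fun j : ℕ => (conjMapAux Ψ) ((Ψᵀ) ^ j * Mu * Ψ ^ j) := by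
        funext j
        simp only [conjMapAux, LinearMap.coe_mk, AddHom.coe_mk]
        rw [pow_succ Ψ j, pow_succ' Ψᵀ j]
        simp only [Matrix.mul_assoc]
      rw [this]
      exact hmapped
    conv_lhs => rw [hPu, hsum.tsum_eq_zero_add]
    rw [hshiftsum.tsum_eq]
    simp [add_comm]
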